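/- There are no integers a, b such that, setting Z = aH + bC in the lattice with Gram matrix [[70,2],[2,−2]], one has (H − 4C)·Z < 0 ≤ (H − C)·Z and −18 ≤ Z² < 0. Equivalently: there are no integers a, B with (36/5)a < B ≤ 18a and −18 ≤ 36a² − B², where B = a − b. -/
import Mathlib


/-- There are no integers a, b such that, for Z = aH + bC in the lattice with Gram matrix
[[70,2],[2,-2]], one has (H - 4C)·Z < 0 ≤ (H - C)·Z and -18 ≤ Z² < 0.
Here (H - 4C)·Z = 62a + 10b, (H - C)·Z = 68a + 4b, Z² = 70a² + 4ab - 2b². -/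
theorem stmt3 : ¬ ∃ a b : ℤ,
    62 * a + 10 * b < 0 ∧ 0 ≤ 68 * a + 4 * b ∧
    -18 ≤ 70 * a ^ 2 + 4 * a * b - 2 * b ^ 2 ∧
    70 * a ^ 2 + 4 * a * b - 2 * b ^ 2 < 0 := by
  rintro ⟨a, b, h1, h2, h3, h4⟩
  set B := a - b with hB
  have hq1 : 36 * a ^ 2 - B ^ 2 < 0 := by nlinarith
  have hq2 : -9 ≤ 36 * a ^ 2 - B ^ 2 := by nlinarith
  have ha0 : a = 0 := by
    by_contra ha
    have hx : 1 ≤ |a| := Int.one_le_abs (by simpa using ha)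
    have hy : 6 * |a| < |B| := by
      by_contra hle
      push_neg at hle
      nlinarith [abs_nonneg a, abs_nonneg B, sq_abs a, sq_abs B]
    nlinarith [abs_nonneg a, abs_nonneg B, sq_abs a, sq_abs B]
  rw [ha0] at h1 h2
  omega
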